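/- arXiv:2111.06297 — 4 statements merged into one kernel-verified Lean document; each statement's English description precedes it below -/
import Mathlib

section
/- Discrete Copson-type lower bound: let σ > 0, q > 0, and (a_j)_{j∈ℤ} a nonnegative sequence with Σ_j a_j^p < ∞ for some p > 0. Then (Σ_{l∈ℤ} (2^{-lσ q} Σ_{j≤l} 2^{jσ q} a_j^q)^{p/q})^{1/p} ≥ c σ^{-1/q} (Σ_l a_l^p)^{1/p} when p < q, where c > 0 depends only on p and q. -/
open scoped ENNReal

lemma jensen_aux {s : Finset ℤ} (x : ℤ → ℝ≥0∞) {r : ℝ} (hr0 : 0 < r) (hr1 : r ≤ 1) :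
    (s.card : ℝ≥0∞) ^ (r - 1) * ∑ j ∈ s, x j ^ r ≤ (∑ j ∈ s, x j) ^ r := by
  rcases Nat.eq_zero_or_pos s.card with h0 | hpos
  · simp [Finset.card_eq_zero.mp h0]
  have hM0 : ((s.card : ℝ≥0∞)) ≠ 0 := by
    simpa using Nat.pos_iff_ne_zero.mp hpos
  have hMt : ((s.card : ℝ≥0∞)) ≠ ⊤ := by simp
  have hrinv : (1:ℝ) ≤ 1/r := by
    rw [le_div_iff₀ hr0]; simpa using hr1
  have h := ENNReal.rpow_sum_le_const_mul_sum_rpow s (fun j => x j ^ r) hrinv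
  have hsimp : ∀ j : ℤ, (x j ^ r) ^ (1/r) = x j := by
    intro j
    rw [← ENNReal.rpow_mul, mul_one_div, div_self hr0.ne', ENNReal.rpow_one]
  simp only [hsimp] at h
  have h2 := ENNReal.rpow_le_rpow h hr0.le
  rw [← ENNReal.rpow_mul, one_div_mul_cancel hr0.ne', ENNReal.rpow_one,
    ENNReal.mul_rpow_of_nonneg _ _ hr0.le, ← ENNReal.rpow_mul] at h2
  calc (s.card : ℝ≥0∞) ^ (r - 1) * ∑ j ∈ s, x j ^ r
      ≤ (s.card : ℝ≥0∞) ^ (r - 1) * ((s.card : ℝ≥0∞) ^ ((1/r - 1) * r) * (∑ j ∈ s, x j) ^ r) :=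
        mul_le_mul_right h2 _
    _ = (∑ j ∈ s, x j) ^ r := by
        rw [← mul_assoc, ← ENNReal.rpow_add _ _ hM0 hMt]
        have : r - 1 + (1/r - 1) * r = 0 := by field_simp; ring
        rw [this, ENNReal.rpow_zero, one_mul]

/-- Discrete Copson-type lower bound: for `σ > 0`, `0 < p < q`, and a nonnegative sequence
`(a_j)_{j∈ℤ}` (modeled with values in `[0,∞]`) with `Σ_j a_j^p < ∞`,
`(Σ_l (2^{-lσq} Σ_{j≤l} 2^{jσq} a_j^q)^{p/q})^{1/p} ≥ c σ^{-1/q} (Σ_l a_l^p)^{1/p}`,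
with `c > 0` depending only on `p` and `q`. -/
theorem stmt7 (p q : ℝ) (hp : 0 < p) (hpq : p < q) :
    ∃ c : ℝ, 0 < c ∧
      ∀ σ : ℝ, 0 < σ → ∀ a : ℤ → ℝ≥0∞, (∑' j : ℤ, a j ^ p) ≠ ⊤ →
        ENNReal.ofReal (c * σ ^ (-(1 / q))) * (∑' l : ℤ, a l ^ p) ^ (1 / p) ≤
          (∑' l : ℤ,
              ((ENNReal.ofReal ((2 : ℝ) ^ (-(l : ℝ) * σ))) ^ q *
                  ∑' j : ℤ,
                    if j ≤ l then (ENNReal.ofReal ((2 : ℝ) ^ ((j : ℝ) * σ))) ^ q * a j ^ q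
                    else 0) ^ (p / q)) ^ (1 / p) := by
  have hq : 0 < q := hp.trans hpq
  refine ⟨(2*q) ^ (-(1/q)), Real.rpow_pos_of_pos (by positivity) _, ?_⟩
  intro σ hσ a _
  set r : ℝ := p / q with hr_def
  have hr0 : 0 < r := div_pos hp hq
  have hr1 : r ≤ 1 := (div_le_one hq).mpr hpq.le
  have hqr : q * r = p := by rw [hr_def]; field_simp
  set N : ℕ := ⌊1/(σ*q)⌋₊ with hN_def
  have hσq : 0 < σ * q := by positivity
  have hN1 : (N:ℝ) * (σ*q) ≤ 1 := by
    have h := Nat.floor_le (by positivity : (0:ℝ) ≤ 1/(σ*q))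
    calc (N:ℝ) * (σ*q) ≤ (1/(σ*q)) * (σ*q) := mul_le_mul_of_nonneg_right h hσq.le
      _ = 1 := by field_simp
  have hN2 : 1/(σ*q) ≤ (N:ℝ)+1 := (Nat.lt_floor_add_one _).le
  set S : ℝ≥0∞ := ∑' l : ℤ, a l ^ p with hS_def
  set M : ℝ≥0∞ := ((N + 1 : ℕ) : ℝ≥0∞) with hM_def
  have hM0 : M ≠ 0 := by simp [hM_def]
  have hMt : M ≠ ⊤ := by simp [hM_def]
  set big : ℤ → ℝ≥0∞ := fun l =>
    (ENNReal.ofReal ((2 : ℝ) ^ (-(l : ℝ) * σ))) ^ q *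
      ∑' j : ℤ, if j ≤ l then (ENNReal.ofReal ((2 : ℝ) ^ ((j : ℝ) * σ))) ^ q * a j ^ q
                else 0 with hbig_def
  -- per-l window bound
  have key : ∀ l : ℤ,
      ENNReal.ofReal 2⁻¹ * ∑ j ∈ Finset.Icc (l - N) l, a j ^ q ≤ big l := by
    intro l
    have hsum := ENNReal.sum_le_tsum (s := Finset.Icc (l - N) l)
      (f := fun j : ℤ => if j ≤ l then (ENNReal.ofReal ((2 : ℝ) ^ ((j : ℝ) * σ))) ^ q * a j ^ q
                    else 0)
    refine le_trans ?_ (mul_le_mul_right hsum _)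
    rw [Finset.mul_sum, Finset.mul_sum]
    refine Finset.sum_le_sum ?_
    intro j hj
    rw [Finset.mem_Icc] at hj
    rw [if_pos hj.2]
    have hjl : -(1:ℝ) ≤ ((j:ℝ) - l) * (σ * q) := by
      have h1 : -(N:ℝ) ≤ (j:ℝ) - l := by
        have h2 : (l:ℝ) - N ≤ j := by exact_mod_cast hj.1
        linarith
      nlinarith
    have e1 : (ENNReal.ofReal ((2 : ℝ) ^ (-(l : ℝ) * σ))) ^ q =
        ENNReal.ofReal ((2:ℝ) ^ (-(l:ℝ) * σ * q)) := by
      rw [Real.rpow_mul two_pos.le (-(l:ℝ)*σ) q,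
        ENNReal.ofReal_rpow_of_pos (Real.rpow_pos_of_pos two_pos _)]
    have e2 : (ENNReal.ofReal ((2 : ℝ) ^ ((j : ℝ) * σ))) ^ q =
        ENNReal.ofReal ((2:ℝ) ^ ((j:ℝ) * σ * q)) := by
      rw [Real.rpow_mul two_pos.le ((j:ℝ)*σ) q,
        ENNReal.ofReal_rpow_of_pos (Real.rpow_pos_of_pos two_pos _)]
    rw [e1, e2, ← mul_assoc, ← ENNReal.ofReal_mul (Real.rpow_pos_of_pos two_pos _).le,
      ← Real.rpow_add two_pos]
    refine mul_le_mul_left (ENNReal.ofReal_le_ofReal ?_) _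
    rw [show (2:ℝ)⁻¹ = (2:ℝ) ^ (-1 : ℝ) by rw [Real.rpow_neg_one]]
    refine Real.rpow_le_rpow_of_exponent_le one_le_two ?_
    nlinarith [hjl]
  have card_Icc : ∀ l : ℤ, (Finset.Icc (l - N) l).card = N + 1 := by
    intro l
    rw [Int.card_Icc, show l + 1 - (l - (N:ℤ)) = ((N+1 : ℕ) : ℤ) by push_cast; ring,
      Int.toNat_natCast]
  -- per-l Jensen bound
  have per_l : ∀ l : ℤ,
      ENNReal.ofReal 2⁻¹ ^ r * (M ^ (r-1) * ∑ j ∈ Finset.Icc (l - N) l, a j ^ p) ≤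
        big l ^ r := by
    intro l
    refine le_trans ?_ (ENNReal.rpow_le_rpow (key l) hr0.le)
    rw [ENNReal.mul_rpow_of_nonneg _ _ hr0.le]
    refine mul_le_mul_right ?_ _
    have hjen := jensen_aux (s := Finset.Icc (l - N) l) (fun j => a j ^ q) hr0 hr1
    rw [card_Icc l] at hjen
    refine le_trans (le_of_eq ?_) hjen
    rw [hM_def]
    congr 1
    refine Finset.sum_congr rfl ?_
    intro j _
    rw [← ENNReal.rpow_mul, hqr]
  -- reindex and Fubini
  have reindex : ∀ l : ℤ, ∑ j ∈ Finset.Icc (l - N) l, a j ^ p =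
      ∑ k ∈ Finset.range (N+1), a (l - k) ^ p := by
    intro l
    have hmap : Finset.Icc (l - N) l =
        (Finset.range (N+1)).map ⟨fun k : ℕ => l - k, by intro x y h; simp only [] at h; omega⟩ := by
      ext j
      simp only [Finset.mem_Icc, Finset.mem_map, Finset.mem_range, Function.Embedding.coeFn_mk]
      constructor
      · intro h
        exact ⟨(l - j).toNat, by omega, by change l - ((l - j).toNat : ℤ) = j; omega⟩
      · rintro ⟨k, hk, rfl⟩
        change l - (N:ℤ) ≤ l - (k:ℤ) ∧ l - (k:ℤ) ≤ l
        omega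
    rw [hmap, Finset.sum_map]
    rfl
  have fub : ∑' l : ℤ, ∑ j ∈ Finset.Icc (l - N) l, a j ^ p = M * S := by
    simp_rw [reindex]
    rw [Summable.tsum_finsetSum (fun k _ => ENNReal.summable)]
    have hshift : ∀ k : ℕ, ∑' l : ℤ, a (l - k) ^ p = S := by
      intro k
      exact (Equiv.subRight (k:ℤ)).tsum_eq (fun l => a l ^ p)
    simp_rw [hshift]
    rw [Finset.sum_const, Finset.card_range, nsmul_eq_mul, hM_def]
  -- core bound
  have core : (ENNReal.ofReal 2⁻¹ * M) ^ r * S ≤ ∑' l : ℤ, big l ^ r := by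
    calc (ENNReal.ofReal 2⁻¹ * M) ^ r * S
        = ENNReal.ofReal 2⁻¹ ^ r * (M ^ (r-1) * (M * S)) := by
          have hMM : M ^ (r-1) * M = M ^ r := by
            nth_rewrite 2 [← ENNReal.rpow_one M]
            rw [← ENNReal.rpow_add _ _ hM0 hMt, sub_add_cancel]
          rw [ENNReal.mul_rpow_of_nonneg _ _ hr0.le, ← hMM]
          ring
      _ = ENNReal.ofReal 2⁻¹ ^ r *
            (M ^ (r-1) * ∑' l : ℤ, ∑ j ∈ Finset.Icc (l - N) l, a j ^ p) := by
          rw [fub]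
      _ = ∑' l : ℤ, ENNReal.ofReal 2⁻¹ ^ r *
            (M ^ (r-1) * ∑ j ∈ Finset.Icc (l - N) l, a j ^ p) := by
          rw [ENNReal.tsum_mul_left, ENNReal.tsum_mul_left]
      _ ≤ ∑' l : ℤ, big l ^ r := ENNReal.tsum_le_tsum per_l
  -- conclude
  have hfinal : ENNReal.ofReal ((2*q) ^ (-(1/q)) * σ ^ (-(1/q))) ≤
      (ENNReal.ofReal 2⁻¹ * M) ^ (1/q) := by
    have hMeq : ENNReal.ofReal 2⁻¹ * M = ENNReal.ofReal (2⁻¹ * ((N:ℝ)+1)) := by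
      rw [ENNReal.ofReal_mul (by norm_num), hM_def]
      congr 1
      rw [← ENNReal.ofReal_natCast]
      push_cast
      ring_nf
    rw [hMeq, ENNReal.ofReal_rpow_of_pos (by positivity)]
    refine ENNReal.ofReal_le_ofReal ?_
    have hL : (2*q) ^ (-(1/q)) * σ ^ (-(1/q)) = ((2*q*σ)⁻¹) ^ (1/q) := by
      rw [← Real.mul_rpow (by positivity) hσ.le, Real.rpow_neg (by positivity),
        ← Real.inv_rpow (by positivity)]
    rw [hL]
    refine Real.rpow_le_rpow (by positivity) ?_ (by positivity)
    have h2 : (2*q*σ) * (2*q*σ)⁻¹ = 1 := mul_inv_cancel₀ (by positivity)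
    rw [div_le_iff₀ hσq] at hN2
    nlinarith [hσq, hσ, hq]
  calc ENNReal.ofReal ((2*q) ^ (-(1/q)) * σ ^ (-(1/q))) * S ^ (1/p)
      ≤ (ENNReal.ofReal 2⁻¹ * M) ^ (1/q) * S ^ (1/p) := mul_le_mul_left hfinal _
    _ = ((ENNReal.ofReal 2⁻¹ * M) ^ r * S) ^ (1/p) := by
        rw [ENNReal.mul_rpow_of_nonneg _ _ (by positivity : (0:ℝ) ≤ 1/p),
          ← ENNReal.rpow_mul]
        congr 2
        rw [hr_def]
        field_simp
      _ ≤ (∑' l : ℤ, big l ^ r) ^ (1/p) :=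
        ENNReal.rpow_le_rpow core (by positivity)
end

section
/- Limit of normalized interpolation norms at θ → 1⁻: let p > 0 and f ∈ A₀ ∩ A₁. Then lim_{θ→1⁻} (θ(1-θ)p)^{1/p} (∫₀^∞ (t^{-θ}K(t,f))^p dt/t)^{1/p} = sup_{t>0} K(t,f)/t. -/
open scoped ENNReal
open MeasureTheory Set Filter

/-- The K-functional of a compatible pair of (quasi-)seminormed spaces. -/
noncomputable def KfunE {V : Type*} [AddCommGroup V] (N0 N1 : V → ℝ≥0∞) (t : ℝ) (f : V) : ℝ≥0∞ :=
  ⨅ (f0 : V) (f1 : V) (_ : f = f0 + f1), N0 f0 + ENNReal.ofReal t * N1 f1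

/-- The real interpolation (quasi-)norm. -/
noncomputable def interpNormE {V : Type*} [AddCommGroup V] (N0 N1 : V → ℝ≥0∞) (θ p : ℝ)
    (f : V) : ℝ≥0∞ :=
  (∫⁻ t in Set.Ioi (0 : ℝ),
      (ENNReal.ofReal (t ^ (-θ)) * KfunE N0 N1 t f) ^ p / ENNReal.ofReal t) ^ (1 / p)

section helpers
variable {V : Type*} [AddCommGroup V] (N0 N1 : V → ℝ≥0∞) (f : V)

lemma KfunE_le (t : ℝ) (f0 f1 : V) (h : f = f0 + f1) :
    KfunE N0 N1 t f ≤ N0 f0 + ENNReal.ofReal t * N1 f1 :=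
  iInf_le_of_le f0 (iInf_le_of_le f1 (iInf_le_of_le h le_rfl))

lemma KfunE_le_left (hN10 : N1 0 = 0) (t : ℝ) : KfunE N0 N1 t f ≤ N0 f := by
  simpa [hN10] using KfunE_le N0 N1 f t f 0 (by simp)

lemma KfunE_le_right (hN00 : N0 0 = 0) (t : ℝ) :
    KfunE N0 N1 t f ≤ ENNReal.ofReal t * N1 f := by
  simpa [hN00] using KfunE_le N0 N1 f t 0 f (by simp)

lemma KfunE_submult {s t : ℝ} (hs : 0 < s) (hst : s ≤ t) :
    KfunE N0 N1 t f ≤ ENNReal.ofReal (t / s) * KfunE N0 N1 s f := by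
  have ht : 0 < t := hs.trans_le hst
  have hts : (0:ℝ) < t / s := div_pos ht hs
  have hc1 : (1:ℝ≥0∞) ≤ ENNReal.ofReal (t / s) := by
    rw [← ENNReal.ofReal_one]
    exact ENNReal.ofReal_le_ofReal ((one_le_div hs).2 hst)
  conv_rhs => rw [KfunE]
  simp_rw [ENNReal.mul_iInf_of_ne (by simp [hts] : ENNReal.ofReal (t/s) ≠ 0)
    ENNReal.ofReal_ne_top]
  refine le_iInf fun f0 => le_iInf fun f1 => le_iInf fun h => ?_
  calc KfunE N0 N1 t f ≤ N0 f0 + ENNReal.ofReal t * N1 f1 := KfunE_le N0 N1 f t f0 f1 h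
    _ ≤ ENNReal.ofReal (t/s) * N0 f0
        + (ENNReal.ofReal (t/s) * ENNReal.ofReal s) * N1 f1 := by
        gcongr
        · exact le_mul_of_one_le_left' hc1
        · rw [← ENNReal.ofReal_mul hts.le, div_mul_cancel₀ _ hs.ne']
    _ = ENNReal.ofReal (t/s) * (N0 f0 + ENNReal.ofReal s * N1 f1) := by ring

/-- K(t)/t is nonincreasing on (0,∞). -/
lemma KfunE_div_anti {s t : ℝ} (hs : 0 < s) (hst : s ≤ t) :
    KfunE N0 N1 t f / ENNReal.ofReal t ≤ KfunE N0 N1 s f / ENNReal.ofReal s := by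
  have ht : 0 < t := hs.trans_le hst
  rw [ENNReal.div_le_iff (by simp [ht]) ENNReal.ofReal_ne_top]
  calc KfunE N0 N1 t f ≤ ENNReal.ofReal (t / s) * KfunE N0 N1 s f :=
        KfunE_submult N0 N1 f hs hst
    _ = KfunE N0 N1 s f / ENNReal.ofReal s * ENNReal.ofReal t := by
        rw [ENNReal.ofReal_div_of_pos hs, div_eq_mul_inv, div_eq_mul_inv]
        ring

end helpers

lemma lintegral_Ioc_zero_rpow {a c : ℝ} (ha : 0 < a) (hc : 0 < c) :
    ∫⁻ t in Set.Ioc (0:ℝ) c, ENNReal.ofReal (t ^ (a - 1)) = ENNReal.ofReal (c ^ a / a) := by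
  have hInt : IntegrableOn (fun t : ℝ => t ^ (a - 1)) (Set.Ioc 0 c) volume := by
    rw [← intervalIntegrable_iff_integrableOn_Ioc_of_le hc.le]
    exact intervalIntegral.intervalIntegrable_rpow' (by linarith)
  rw [← ofReal_integral_eq_lintegral_ofReal hInt
    ((ae_restrict_iff' measurableSet_Ioc).2 (Eventually.of_forall
      fun x hx => Real.rpow_nonneg hx.1.le _))]
  congr 1
  rw [← intervalIntegral.integral_of_le hc.le, integral_rpow (Or.inl (by linarith))]
  rw [Real.zero_rpow (by linarith : a - 1 + 1 ≠ 0)]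
  ring_nf

lemma lintegral_Ioi_rpow_neg {a c : ℝ} (ha : 0 < a) (hc : 0 < c) :
    ∫⁻ t in Set.Ioi c, ENNReal.ofReal (t ^ (-a - 1)) = ENNReal.ofReal (c ^ (-a) / a) := by
  have hInt : IntegrableOn (fun t : ℝ => t ^ (-a - 1)) (Set.Ioi c) volume :=
    integrableOn_Ioi_rpow_of_lt (by linarith) hc
  rw [← ofReal_integral_eq_lintegral_ofReal hInt
    ((ae_restrict_iff' measurableSet_Ioi).2 (Eventually.of_forall
      fun x hx => Real.rpow_nonneg (hc.trans hx).le _))]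
  congr 1
  rw [integral_Ioi_rpow_of_lt (by linarith) hc]
  rw [show -a - 1 + 1 = -a by ring]
  rw [neg_div, div_neg, neg_neg]

lemma integrand_eq {θ p t : ℝ} (hp : 0 < p) (ht : 0 < t) (x : ℝ≥0∞) :
    (ENNReal.ofReal (t ^ (-θ)) * x) ^ p / ENNReal.ofReal t
      = x ^ p * ENNReal.ofReal (t ^ (-θ * p - 1)) := by
  rw [ENNReal.mul_rpow_of_nonneg _ _ hp.le,
    ENNReal.ofReal_rpow_of_pos (Real.rpow_pos_of_pos ht _),
    ← Real.rpow_mul ht.le,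
    div_eq_mul_inv, ← ENNReal.ofReal_inv_of_pos ht,
    ← Real.rpow_neg_one t]
  rw [mul_comm (ENNReal.ofReal _) (x ^ p), mul_assoc,
    ← ENNReal.ofReal_mul (Real.rpow_nonneg ht.le _),
    ← Real.rpow_add ht]
  ring_nf

section bounds
variable {V : Type*} [AddCommGroup V] (N0 N1 : V → ℝ≥0∞) (f : V)

lemma upper_bound (hN10 : N1 0 = 0) {p : ℝ} (hp : 0 < p) (S : ℝ≥0∞)
    (hS : ∀ t : ℝ, 0 < t → KfunE N0 N1 t f ≤ ENNReal.ofReal t * S)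
    (hSp : S ^ p ≠ ⊤) (hN0p : N0 f ^ p ≠ ⊤)
    {θ : ℝ} (hθ : θ ∈ Set.Ioo (0:ℝ) 1) :
    ENNReal.ofReal ((θ * (1 - θ) * p) ^ (1 / p)) * interpNormE N0 N1 θ p f
      ≤ (ENNReal.ofReal θ * S ^ p + ENNReal.ofReal (1 - θ) * N0 f ^ p) ^ (1 / p) := by
  obtain ⟨hθ0, hθ1⟩ := hθ
  have h1θ : (0:ℝ) < 1 - θ := by linarith
  have hc : (0:ℝ) < θ * (1 - θ) * p := by positivity
  rw [interpNormE, ← ENNReal.ofReal_rpow_of_pos hc,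
    ← ENNReal.mul_rpow_of_nonneg _ _ (by positivity : (0:ℝ) ≤ 1/p)]
  refine ENNReal.rpow_le_rpow ?_ (by positivity)
  have hI : (∫⁻ t in Set.Ioi (0:ℝ),
      (ENNReal.ofReal (t ^ (-θ)) * KfunE N0 N1 t f) ^ p / ENNReal.ofReal t)
      = ∫⁻ t in Set.Ioi (0:ℝ),
        KfunE N0 N1 t f ^ p * ENNReal.ofReal (t ^ (-(θ * p) - 1)) := by
    refine setLIntegral_congr_fun measurableSet_Ioi (fun t ht => ?_)
    rw [integrand_eq hp ht, neg_mul]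
  rw [hI]
  have hsplit : (∫⁻ t in Set.Ioi (0:ℝ),
        KfunE N0 N1 t f ^ p * ENNReal.ofReal (t ^ (-(θ * p) - 1)))
      ≤ S ^ p * ENNReal.ofReal (1 / ((1 - θ) * p))
        + N0 f ^ p * ENNReal.ofReal (1 / (θ * p)) := by
    rw [← Set.Ioc_union_Ioi_eq_Ioi (zero_le_one (α := ℝ)),
      lintegral_union measurableSet_Ioi (Set.Ioc_disjoint_Ioi le_rfl)]
    have hA : (∫⁻ t in Set.Ioc (0:ℝ) 1,
          KfunE N0 N1 t f ^ p * ENNReal.ofReal (t ^ (-(θ * p) - 1)))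
        ≤ S ^ p * ENNReal.ofReal (1 / ((1 - θ) * p)) := by
      calc (∫⁻ t in Set.Ioc (0:ℝ) 1,
            KfunE N0 N1 t f ^ p * ENNReal.ofReal (t ^ (-(θ * p) - 1)))
          ≤ ∫⁻ t in Set.Ioc (0:ℝ) 1, S ^ p * ENNReal.ofReal (t ^ ((1-θ)*p - 1)) := by
            refine setLIntegral_mono' measurableSet_Ioc fun t ht => ?_
            have ht0 : 0 < t := ht.1
            have hK : KfunE N0 N1 t f ^ p ≤ ENNReal.ofReal (t ^ p) * S ^ p := by
              calc KfunE N0 N1 t f ^ p ≤ (ENNReal.ofReal t * S) ^ p :=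
                    ENNReal.rpow_le_rpow (hS t ht0) hp.le
                _ = _ := by
                    rw [ENNReal.mul_rpow_of_nonneg _ _ hp.le,
                      ENNReal.ofReal_rpow_of_pos ht0]
            calc KfunE N0 N1 t f ^ p * ENNReal.ofReal (t ^ (-(θ * p) - 1))
                ≤ ENNReal.ofReal (t ^ p) * S ^ p * ENNReal.ofReal (t ^ (-(θ * p) - 1)) := by
                  gcongr
              _ = S ^ p * ENNReal.ofReal (t ^ ((1-θ)*p - 1)) := by
                  rw [mul_comm (ENNReal.ofReal (t ^ p)) (S ^ p), mul_assoc,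
                    ← ENNReal.ofReal_mul (Real.rpow_nonneg ht0.le _),
                    ← Real.rpow_add ht0, show p + (-(θ * p) - 1) = (1-θ)*p - 1 by ring]
        _ = S ^ p * ENNReal.ofReal (1 / ((1 - θ) * p)) := by
            rw [lintegral_const_mul' _ _ hSp,
              lintegral_Ioc_zero_rpow (by positivity) one_pos, Real.one_rpow]
    have hB : (∫⁻ t in Set.Ioi (1:ℝ),
          KfunE N0 N1 t f ^ p * ENNReal.ofReal (t ^ (-(θ * p) - 1)))
        ≤ N0 f ^ p * ENNReal.ofReal (1 / (θ * p)) := by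
      calc (∫⁻ t in Set.Ioi (1:ℝ),
            KfunE N0 N1 t f ^ p * ENNReal.ofReal (t ^ (-(θ * p) - 1)))
          ≤ ∫⁻ t in Set.Ioi (1:ℝ), N0 f ^ p * ENNReal.ofReal (t ^ (-(θ * p) - 1)) := by
            refine setLIntegral_mono' measurableSet_Ioi fun t ht => ?_
            gcongr
            exact KfunE_le_left N0 N1 f hN10 t
        _ = N0 f ^ p * ENNReal.ofReal (1 / (θ * p)) := by
            rw [lintegral_const_mul' _ _ hN0p,
              lintegral_Ioi_rpow_neg (by positivity) one_pos, Real.one_rpow]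
    exact add_le_add hA hB
  refine le_trans (mul_le_mul_right hsplit _) ?_
  rw [mul_add]
  have e1 : ENNReal.ofReal (θ * (1 - θ) * p) * (S ^ p * ENNReal.ofReal (1 / ((1 - θ) * p)))
      = ENNReal.ofReal θ * S ^ p := by
    rw [mul_left_comm, ← ENNReal.ofReal_mul hc.le,
      show θ * (1 - θ) * p * (1 / ((1 - θ) * p)) = θ by field_simp, mul_comm]
  have e2 : ENNReal.ofReal (θ * (1 - θ) * p) * (N0 f ^ p * ENNReal.ofReal (1 / (θ * p)))
      = ENNReal.ofReal (1 - θ) * N0 f ^ p := by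
    rw [mul_left_comm, ← ENNReal.ofReal_mul hc.le,
      show θ * (1 - θ) * p * (1 / (θ * p)) = 1 - θ by field_simp, mul_comm]
  rw [e1, e2]
end bounds

section lower
variable {V : Type*} [AddCommGroup V] (N0 N1 : V → ℝ≥0∞) (f : V)

lemma lower_bound {p : ℝ} (hp : 0 < p) {t0 : ℝ} (ht0 : 0 < t0)
    (hK : KfunE N0 N1 t0 f ≠ ⊤) {θ : ℝ} (hθ : θ ∈ Set.Ioo (0:ℝ) 1) :
    ENNReal.ofReal (θ ^ (1/p) * t0 ^ (1-θ)) * (KfunE N0 N1 t0 f / ENNReal.ofReal t0)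
      ≤ ENNReal.ofReal ((θ * (1 - θ) * p) ^ (1 / p)) * interpNormE N0 N1 θ p f := by
  obtain ⟨hθ0, hθ1⟩ := hθ
  have h1θ : (0:ℝ) < 1 - θ := by linarith
  have hc : (0:ℝ) < θ * (1 - θ) * p := by positivity
  set C := KfunE N0 N1 t0 f / ENNReal.ofReal t0 with hC
  have hCtop : C ≠ ⊤ := by
    rw [hC, ENNReal.div_eq_inv_mul]
    exact ENNReal.mul_ne_top (by simp [ht0]) hK
  have hCp : C ^ p ≠ ⊤ := ENNReal.rpow_ne_top_of_nonneg hp.le hCtop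
  rw [interpNormE, ← ENNReal.ofReal_rpow_of_pos hc,
    ← ENNReal.mul_rpow_of_nonneg _ _ (by positivity : (0:ℝ) ≤ 1/p)]
  have hI : (∫⁻ t in Set.Ioi (0:ℝ),
      (ENNReal.ofReal (t ^ (-θ)) * KfunE N0 N1 t f) ^ p / ENNReal.ofReal t)
      = ∫⁻ t in Set.Ioi (0:ℝ),
        KfunE N0 N1 t f ^ p * ENNReal.ofReal (t ^ (-(θ * p) - 1)) := by
    refine setLIntegral_congr_fun measurableSet_Ioi (fun t ht => ?_)
    rw [integrand_eq hp ht, neg_mul]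
  rw [hI]
  have hlow : C ^ p * ENNReal.ofReal (t0 ^ ((1-θ)*p) / ((1-θ)*p))
      ≤ ∫⁻ t in Set.Ioi (0:ℝ),
        KfunE N0 N1 t f ^ p * ENNReal.ofReal (t ^ (-(θ * p) - 1)) := by
    rw [← lintegral_Ioc_zero_rpow (by positivity : (0:ℝ) < (1-θ)*p) ht0,
      ← lintegral_const_mul' _ _ hCp]
    refine le_trans (setLIntegral_mono' measurableSet_Ioc fun t ht => ?_)
      (lintegral_mono_set Set.Ioc_subset_Ioi_self)
    have ht' : 0 < t := ht.1
    have h1 : C ≤ KfunE N0 N1 t f / ENNReal.ofReal t :=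
      KfunE_div_anti N0 N1 f ht' ht.2
    have htp0 : ENNReal.ofReal (t ^ p) ≠ 0 := by
      simp [Real.rpow_pos_of_pos ht']
    calc C ^ p * ENNReal.ofReal (t ^ ((1-θ)*p - 1))
        = C ^ p * (ENNReal.ofReal (t ^ p) * ENNReal.ofReal (t ^ (-(θ*p) - 1))) := by
          rw [← ENNReal.ofReal_mul (Real.rpow_nonneg ht'.le _),
            ← Real.rpow_add ht', show p + (-(θ*p) - 1) = (1-θ)*p - 1 by ring]
      _ ≤ (KfunE N0 N1 t f / ENNReal.ofReal t) ^ p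
            * (ENNReal.ofReal (t ^ p) * ENNReal.ofReal (t ^ (-(θ*p) - 1))) := by
          gcongr
      _ = KfunE N0 N1 t f ^ p / ENNReal.ofReal (t ^ p) * ENNReal.ofReal (t ^ p)
            * ENNReal.ofReal (t ^ (-(θ*p) - 1)) := by
          rw [ENNReal.div_rpow_of_nonneg _ _ hp.le, ENNReal.ofReal_rpow_of_pos ht',
            mul_assoc]
      _ = KfunE N0 N1 t f ^ p * ENNReal.ofReal (t ^ (-(θ*p) - 1)) := by
          rw [ENNReal.div_mul_cancel htp0 ENNReal.ofReal_ne_top]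
  refine le_trans (le_of_eq ?_)
    (ENNReal.rpow_le_rpow (mul_le_mul_right hlow _) (by positivity : (0:ℝ) ≤ 1/p))
  rw [mul_left_comm, ← ENNReal.ofReal_mul hc.le,
    show θ * (1 - θ) * p * (t0 ^ ((1-θ)*p) / ((1-θ)*p)) = θ * t0 ^ ((1-θ)*p) by
      field_simp,
    ENNReal.mul_rpow_of_nonneg _ _ (by positivity : (0:ℝ) ≤ 1/p),
    ← ENNReal.rpow_mul, mul_one_div_cancel hp.ne', ENNReal.rpow_one,
    ENNReal.ofReal_rpow_of_pos (by positivity),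
    Real.mul_rpow hθ0.le (Real.rpow_nonneg ht0.le _),
    ← Real.rpow_mul ht0.le,
    show (1-θ)*p*(1/p) = 1-θ by field_simp]
  exact mul_comm _ _
end lower

/-- Limit of normalized interpolation norms as `θ → 1⁻`: for a compatible pair of
quasi-seminormed spaces `(A₀, A₁)`, `p > 0` and `f ∈ A₀ ∩ A₁`,
`lim_{θ→1⁻} (θ(1-θ)p)^{1/p} ‖f‖_{(A₀,A₁)_{θ,p}} = sup_{t>0} K(t,f)/t`. -/
theorem stmt9 {V : Type*} [AddCommGroup V] (N0 N1 : V → ℝ≥0∞)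
    (hN00 : N0 0 = 0) (hN10 : N1 0 = 0)
    (hN0neg : ∀ x, N0 (-x) = N0 x) (hN1neg : ∀ x, N1 (-x) = N1 x)
    (κ : ℝ≥0∞) (hκ : 1 ≤ κ) (hκtop : κ ≠ ⊤)
    (hN0tri : ∀ x y, N0 (x + y) ≤ κ * (N0 x + N0 y))
    (hN1tri : ∀ x y, N1 (x + y) ≤ κ * (N1 x + N1 y))
    (p : ℝ) (hp : 0 < p) (f : V) (hf0 : N0 f ≠ ⊤) (hf1 : N1 f ≠ ⊤) :
    Filter.Tendsto
      (fun θ : ℝ => ENNReal.ofReal ((θ * (1 - θ) * p) ^ (1 / p)) * interpNormE N0 N1 θ p f)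
      (nhdsWithin 1 (Set.Iio 1))
      (nhds (⨆ t ∈ Set.Ioi (0 : ℝ), KfunE N0 N1 t f / ENNReal.ofReal t)) := by
  set S := ⨆ t ∈ Set.Ioi (0:ℝ), KfunE N0 N1 t f / ENNReal.ofReal t with hSdef
  have hS_le : S ≤ N1 f := by
    refine iSup₂_le fun t ht => ?_
    have ht' : (0:ℝ) < t := ht
    rw [ENNReal.div_le_iff (ENNReal.ofReal_pos.2 ht').ne' ENNReal.ofReal_ne_top, mul_comm]
    exact KfunE_le_right N0 N1 f hN00 t
  have hS_top : S ≠ ⊤ := (lt_of_le_of_lt hS_le hf1.lt_top).ne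
  have hSbound : ∀ t : ℝ, 0 < t → KfunE N0 N1 t f ≤ ENNReal.ofReal t * S := by
    intro t ht
    have h := le_biSup (fun t : ℝ => KfunE N0 N1 t f / ENNReal.ofReal t)
      (Set.mem_Ioi.2 ht)
    rwa [ENNReal.div_le_iff (ENNReal.ofReal_pos.2 ht).ne' ENNReal.ofReal_ne_top,
      mul_comm] at h
  have hSp : S ^ p ≠ ⊤ := ENNReal.rpow_ne_top_of_nonneg hp.le hS_top
  have hN0p : N0 f ^ p ≠ ⊤ := ENNReal.rpow_ne_top_of_nonneg hp.le hf0
  have hev : ∀ᶠ θ in nhdsWithin (1:ℝ) (Set.Iio 1), θ ∈ Set.Ioo (0:ℝ) 1 := by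
    filter_upwards [self_mem_nhdsWithin,
      eventually_nhdsWithin_of_eventually_nhds (eventually_gt_nhds one_pos)] with θ h1 h2
    exact ⟨h2, h1⟩
  have hub : Tendsto
      (fun θ : ℝ => (ENNReal.ofReal θ * S ^ p + ENNReal.ofReal (1 - θ) * N0 f ^ p) ^ (1/p))
      (nhdsWithin (1:ℝ) (Set.Iio 1)) (nhds S) := by
    have t1 : Tendsto (fun θ : ℝ => ENNReal.ofReal θ) (nhdsWithin (1:ℝ) (Set.Iio 1))
        (nhds 1) := by
      simpa using (ENNReal.continuous_ofReal.tendsto (1:ℝ)).mono_left nhdsWithin_le_nhds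
    have h1 : Tendsto (fun θ : ℝ => ENNReal.ofReal θ * S ^ p)
        (nhdsWithin (1:ℝ) (Set.Iio 1)) (nhds (S ^ p)) := by
      simpa using ENNReal.Tendsto.mul_const t1 (Or.inl one_ne_zero)
    have t2 : Tendsto (fun θ : ℝ => ENNReal.ofReal (1 - θ)) (nhdsWithin (1:ℝ) (Set.Iio 1))
        (nhds 0) := by
      have : Continuous (fun θ : ℝ => ENNReal.ofReal (1 - θ)) :=
        ENNReal.continuous_ofReal.comp (continuous_const.sub continuous_id)
      simpa using (this.tendsto (1:ℝ)).mono_left nhdsWithin_le_nhds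
    have h2 : Tendsto (fun θ : ℝ => ENNReal.ofReal (1 - θ) * N0 f ^ p)
        (nhdsWithin (1:ℝ) (Set.Iio 1)) (nhds 0) := by
      simpa using ENNReal.Tendsto.mul_const t2 (Or.inr hN0p)
    have hsum := h1.add h2
    rw [add_zero] at hsum
    have := ((ENNReal.continuous_rpow_const (y := 1/p)).tendsto (S ^ p)).comp hsum
    have hval : (S ^ p) ^ (1/p) = S := by
      rw [← ENNReal.rpow_mul, mul_one_div_cancel hp.ne', ENNReal.rpow_one]
    rw [hval] at this
    exact this
  have hlimsup : limsup
      (fun θ : ℝ => ENNReal.ofReal ((θ * (1 - θ) * p) ^ (1 / p)) * interpNormE N0 N1 θ p f)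
      (nhdsWithin (1:ℝ) (Set.Iio 1)) ≤ S := by
    rw [← hub.limsup_eq]
    exact limsup_le_limsup (hev.mono fun θ hθ =>
      upper_bound N0 N1 f hN10 hp S hSbound hSp hN0p hθ)
  have hliminf : S ≤ liminf
      (fun θ : ℝ => ENNReal.ofReal ((θ * (1 - θ) * p) ^ (1 / p)) * interpNormE N0 N1 θ p f)
      (nhdsWithin (1:ℝ) (Set.Iio 1)) := by
    refine iSup₂_le fun t0 ht0 => ?_
    have ht0' : (0:ℝ) < t0 := ht0
    have hKt0 : KfunE N0 N1 t0 f ≠ ⊤ :=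
      ne_top_of_le_ne_top hf0 (KfunE_le_left N0 N1 f hN10 t0)
    have hg : Tendsto
        (fun θ : ℝ => ENNReal.ofReal (θ ^ (1/p) * t0 ^ (1-θ))
          * (KfunE N0 N1 t0 f / ENNReal.ofReal t0))
        (nhdsWithin (1:ℝ) (Set.Iio 1)) (nhds (KfunE N0 N1 t0 f / ENNReal.ofReal t0)) := by
      have c2 : Continuous (fun θ : ℝ => t0 ^ (1-θ)) := by
        simp only [Real.rpow_def_of_pos ht0']
        fun_prop
      have c1 : ContinuousAt (fun θ : ℝ => θ ^ (1/p)) 1 :=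
        Real.continuousAt_rpow_const 1 (1/p) (Or.inl one_ne_zero)
      have hr : Tendsto (fun θ : ℝ => θ ^ (1/p) * t0 ^ (1-θ)) (nhds (1:ℝ)) (nhds 1) := by
        have h : Tendsto (fun θ : ℝ => θ ^ (1/p) * t0 ^ (1-θ)) (nhds (1:ℝ))
            (nhds ((1:ℝ) ^ (1/p) * t0 ^ (1-(1:ℝ)))) := c1.mul c2.continuousAt
        simpa using h
      have h3 : Tendsto (fun θ : ℝ => ENNReal.ofReal (θ ^ (1/p) * t0 ^ (1-θ)))
          (nhdsWithin (1:ℝ) (Set.Iio 1)) (nhds (ENNReal.ofReal 1)) :=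
        (ENNReal.continuous_ofReal.tendsto (1:ℝ)).comp
          (hr.mono_left (nhdsWithin_le_nhds (s := Set.Iio 1)))
      have h4 := ENNReal.Tendsto.mul_const (b := KfunE N0 N1 t0 f / ENNReal.ofReal t0)
        h3 (Or.inl (by simp : ENNReal.ofReal 1 ≠ 0))
      simpa using h4
    rw [← hg.liminf_eq]
    exact liminf_le_liminf (hev.mono fun θ hθ => lower_bound N0 N1 f hp ht0' hKt0 hθ)
  exact tendsto_of_le_liminf_of_limsup_le hliminf hlimsup
end

section
/- Limit of normalized interpolation norms at θ → 0⁺: let p > 0 and f ∈ A₀ ∩ A₁. Then lim_{θ→0⁺} (θ(1-θ)p)^{1/p} (∫₀^∞ (t^{-θ}K(t,f))^p dt/t)^{1/p} = sup_{t>0} K(t,f). -/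
open scoped ENNReal

section Proof
open MeasureTheory Set Filter

section Aux
variable {V : Type*} [AddCommGroup V] (N0 N1 : V → ℝ≥0∞)

lemma Kfun_mono (f : V) : Monotone (fun t => KfunE N0 N1 t f) := by
  intro s t hst
  refine iInf_mono fun f0 => iInf_mono fun f1 => iInf_mono fun h => ?_
  exact add_le_add le_rfl (mul_le_mul_left (ENNReal.ofReal_le_ofReal hst) _)

lemma Kfun_le_N0 (hN10 : N1 0 = 0) (t : ℝ) (f : V) : KfunE N0 N1 t f ≤ N0 f := by
  calc KfunE N0 N1 t f ≤ N0 f + ENNReal.ofReal t * N1 0 :=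
        iInf_le_of_le f (iInf_le_of_le 0 (iInf_le_of_le (by simp) le_rfl))
    _ = N0 f := by simp [hN10]

lemma Kfun_le_t_N1 (hN00 : N0 0 = 0) (t : ℝ) (f : V) :
    KfunE N0 N1 t f ≤ ENNReal.ofReal t * N1 f := by
  calc KfunE N0 N1 t f ≤ N0 0 + ENNReal.ofReal t * N1 f :=
        iInf_le_of_le 0 (iInf_le_of_le f (iInf_le_of_le (by simp) le_rfl))
    _ = _ := by simp [hN00]

end Aux

lemma lint_tail {a c : ℝ} (ha : a < 0) (hc : 0 < c) :
    ∫⁻ t in Set.Ioi c, ENNReal.ofReal (t ^ (a - 1)) = ENNReal.ofReal (c ^ a / (-a)) := by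
  rw [← MeasureTheory.ofReal_integral_eq_lintegral_ofReal
      (integrableOn_Ioi_rpow_of_lt (by linarith) hc)
      (by filter_upwards [MeasureTheory.ae_restrict_mem measurableSet_Ioi] with t ht
          exact Real.rpow_nonneg (le_of_lt (hc.trans ht)) _)]
  rw [integral_Ioi_rpow_of_lt (by linarith) hc]
  norm_num
  rw [neg_div, div_neg]

lemma lint_head {b c : ℝ} (hb : 0 < b) (hc : 0 < c) :
    ∫⁻ t in Set.Ioc 0 c, ENNReal.ofReal (t ^ (b - 1)) = ENNReal.ofReal (c ^ b / b) := by
  have hint : IntervalIntegrable (fun t : ℝ => t ^ (b - 1)) volume 0 c :=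
    intervalIntegral.intervalIntegrable_rpow' (by linarith)
  rw [← MeasureTheory.ofReal_integral_eq_lintegral_ofReal
      ((intervalIntegrable_iff_integrableOn_Ioc_of_le hc.le).mp hint)
      (by filter_upwards [MeasureTheory.ae_restrict_mem measurableSet_Ioc] with t ht
          exact Real.rpow_nonneg ht.1.le _)]
  have h := integral_rpow (a := 0) (b := c) (r := b - 1) (Or.inl (by linarith))
  rw [intervalIntegral.integral_of_le hc.le] at h
  rw [h]
  norm_num [Real.zero_rpow hb.ne']

lemma interp_integrand {V : Type*} [AddCommGroup V] (N0 N1 : V → ℝ≥0∞) {θ p : ℝ} (hp : 0 < p)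
    (f : V) :
    ∫⁻ t in Set.Ioi (0:ℝ), (ENNReal.ofReal (t ^ (-θ)) * KfunE N0 N1 t f) ^ p / ENNReal.ofReal t
      = ∫⁻ t in Set.Ioi (0:ℝ), ENNReal.ofReal (t ^ (-θ * p - 1)) * KfunE N0 N1 t f ^ p := by
  refine MeasureTheory.setLIntegral_congr_fun measurableSet_Ioi
    (fun t ht => ?_)
  have ht0 : (0:ℝ) < t := ht
  have h1 : ENNReal.ofReal (t ^ (-θ * p - 1))
      = ENNReal.ofReal (t ^ (-θ)) ^ p * (ENNReal.ofReal t)⁻¹ := by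
    rw [show -θ * p - 1 = -θ * p + (-1) by ring, Real.rpow_add ht0,
        ENNReal.ofReal_mul (Real.rpow_nonneg ht0.le _), Real.rpow_neg_one,
        ENNReal.ofReal_inv_of_pos ht0, Real.rpow_mul ht0.le,
        ← ENNReal.ofReal_rpow_of_pos (Real.rpow_pos_of_pos ht0 _)]
  rw [ENNReal.mul_rpow_of_nonneg _ _ hp.le, div_eq_mul_inv, h1]
  ring


/-- Limit of normalized interpolation norms as `θ → 0⁺`: for a compatible pair of
quasi-seminormed spaces `(A₀, A₁)`, `p > 0` and `f ∈ A₀ ∩ A₁`,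
`lim_{θ→0⁺} (θ(1-θ)p)^{1/p} ‖f‖_{(A₀,A₁)_{θ,p}} = sup_{t>0} K(t,f)`. -/
theorem stmt10 {V : Type*} [AddCommGroup V] (N0 N1 : V → ℝ≥0∞)
    (hN00 : N0 0 = 0) (hN10 : N1 0 = 0)
    (hN0neg : ∀ x, N0 (-x) = N0 x) (hN1neg : ∀ x, N1 (-x) = N1 x)
    (κ : ℝ≥0∞) (hκ : 1 ≤ κ) (hκtop : κ ≠ ⊤)
    (hN0tri : ∀ x y, N0 (x + y) ≤ κ * (N0 x + N0 y))
    (hN1tri : ∀ x y, N1 (x + y) ≤ κ * (N1 x + N1 y))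
    (p : ℝ) (hp : 0 < p) (f : V) (hf0 : N0 f ≠ ⊤) (hf1 : N1 f ≠ ⊤) :
    Filter.Tendsto
      (fun θ : ℝ => ENNReal.ofReal ((θ * (1 - θ) * p) ^ (1 / p)) * interpNormE N0 N1 θ p f)
      (nhdsWithin 0 (Set.Ioi 0))
      (nhds (⨆ t ∈ Set.Ioi (0 : ℝ), KfunE N0 N1 t f)) := by
  have hKmono : Monotone (fun t => KfunE N0 N1 t f) := Kfun_mono N0 N1 f
  have hKle0 : ∀ t, KfunE N0 N1 t f ≤ N0 f := fun t => Kfun_le_N0 N0 N1 hN10 t f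
  have hKle1 : ∀ t, KfunE N0 N1 t f ≤ ENNReal.ofReal t * N1 f :=
    fun t => Kfun_le_t_N1 N0 N1 hN00 t f
  set S : ℝ≥0∞ := ⨆ t ∈ Set.Ioi (0:ℝ), KfunE N0 N1 t f with hSdef
  have hSle : S ≤ N0 f := iSup₂_le fun t _ => hKle0 t
  have hStop : S ≠ ⊤ := (lt_of_le_of_lt hSle hf0.lt_top).ne
  have hKS : ∀ t : ℝ, 0 < t → KfunE N0 N1 t f ≤ S :=
    fun t ht => le_iSup₂ (f := fun (t : ℝ) (_ : t ∈ Set.Ioi (0:ℝ)) => KfunE N0 N1 t f) t ht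
  set I : ℝ → ℝ≥0∞ := fun θ =>
    ∫⁻ t in Set.Ioi (0:ℝ), ENNReal.ofReal (t ^ (-θ * p - 1)) * KfunE N0 N1 t f ^ p with hIdef
  have hInterp : ∀ θ : ℝ, interpNormE N0 N1 θ p f = I θ ^ (1/p) := fun θ => by
    rw [interpNormE, interp_integrand N0 N1 hp f]
  set l : Filter ℝ := nhdsWithin 0 (Set.Ioi 0) with hldef
  have hl : ∀ᶠ θ : ℝ in l, θ ∈ Set.Ioo (0:ℝ) 1 :=
    Filter.eventually_of_mem (Ioo_mem_nhdsGT_of_mem ⟨le_refl 0, one_pos⟩) fun θ hθ => hθ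
  have hθ0 : Filter.Tendsto (fun θ : ℝ => θ) l (nhds 0) :=
    Filter.tendsto_id.mono_left nhdsWithin_le_nhds
  have hOM : ∀ e : ℝ, Measurable fun t : ℝ => ENNReal.ofReal (t ^ e) := fun e => by fun_prop
  refine tendsto_of_le_liminf_of_limsup_le ?_ ?_
  · -- liminf part
    rw [hSdef]
    refine iSup₂_le fun T hT => ?_
    have hT0 : (0:ℝ) < T := hT
    set c : ℝ → ℝ≥0∞ := fun θ =>
      ENNReal.ofReal (((1-θ) * T ^ (-(θ*p))) ^ (1/p)) * KfunE N0 N1 T f with hcdef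
    have hctend : Filter.Tendsto c l (nhds (KfunE N0 N1 T f)) := by
      have hF : Filter.Tendsto (fun θ : ℝ => ((1-θ) * T ^ (-(θ*p))) ^ (1/p)) l (nhds 1) := by
        have h1 : ContinuousAt (fun θ : ℝ => (1-θ) * T ^ (-(θ*p))) 0 := by
          apply ContinuousAt.mul
          · exact (continuous_const.sub continuous_id).continuousAt
          · exact (Real.continuousAt_const_rpow hT0.ne').comp
              ((continuous_id.mul continuous_const).neg.continuousAt)
        have h2 : ContinuousAt (fun θ : ℝ => ((1-θ) * T ^ (-(θ*p))) ^ (1/p)) 0 :=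
          h1.rpow_const (Or.inr (by positivity))
        have h3 : ((1-(0:ℝ)) * T ^ (-(0*p))) ^ (1/p) = 1 := by
          norm_num
        have := h2.tendsto.mono_left (nhdsWithin_le_nhds (s := Set.Ioi (0:ℝ)))
        rw [h3] at this
        exact this
      have := ENNReal.Tendsto.mul_const (ENNReal.tendsto_ofReal hF)
        (b := KfunE N0 N1 T f) (Or.inl (by simp))
      rw [hcdef]
      simpa using this
    have hcle : ∀ᶠ θ : ℝ in l,
        c θ ≤ ENNReal.ofReal ((θ * (1 - θ) * p) ^ (1 / p)) * interpNormE N0 N1 θ p f := by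
      filter_upwards [hl] with θ hθ
      have hθp : 0 < θ * p := mul_pos hθ.1 hp
      have hD : 0 < T ^ (-(θ*p)) / (θ*p) := by positivity
      have h1 : ∫⁻ t in Set.Ioi T, ENNReal.ofReal (t ^ (-θ * p - 1)) * KfunE N0 N1 T f ^ p
          ≤ I θ := by
        calc ∫⁻ t in Set.Ioi T, ENNReal.ofReal (t ^ (-θ * p - 1)) * KfunE N0 N1 T f ^ p
            ≤ ∫⁻ t in Set.Ioi T, ENNReal.ofReal (t ^ (-θ * p - 1)) * KfunE N0 N1 t f ^ p := by
              refine MeasureTheory.setLIntegral_mono' measurableSet_Ioi fun t ht => ?_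
              exact mul_le_mul_right (ENNReal.rpow_le_rpow (hKmono (le_of_lt ht)) hp.le) _
          _ ≤ I θ := MeasureTheory.lintegral_mono_set (Set.Ioi_subset_Ioi hT0.le)
      have h2 : ∫⁻ t in Set.Ioi T, ENNReal.ofReal (t ^ (-θ * p - 1)) * KfunE N0 N1 T f ^ p
          = ENNReal.ofReal (T ^ (-(θ*p)) / (θ*p)) * KfunE N0 N1 T f ^ p := by
        rw [MeasureTheory.lintegral_mul_const _ (hOM _),
          show -θ * p - 1 = (-(θ*p)) - 1 by ring, lint_tail (by linarith) hT0, neg_neg]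
      have hA : 0 < θ * (1-θ) * p := mul_pos (mul_pos hθ.1 (by linarith [hθ.2])) hp
      have hEq : c θ = ENNReal.ofReal ((θ * (1-θ) * p) ^ (1/p)) *
          (ENNReal.ofReal (T ^ (-(θ*p)) / (θ*p)) * KfunE N0 N1 T f ^ p) ^ (1/p) := by
        show ENNReal.ofReal (((1-θ) * T ^ (-(θ*p))) ^ (1/p)) * KfunE N0 N1 T f = _
        rw [ENNReal.mul_rpow_of_nonneg _ _ (by positivity),
          ENNReal.ofReal_rpow_of_pos hD, one_div, ENNReal.rpow_rpow_inv hp.ne',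
          ← mul_assoc, ← ENNReal.ofReal_mul (Real.rpow_nonneg hA.le _),
          ← Real.mul_rpow hA.le (le_of_lt hD),
          show θ * (1-θ) * p * (T ^ (-(θ*p)) / (θ*p)) = (1-θ) * T ^ (-(θ*p)) from by
            have := hθ.1.ne'; field_simp]
      rw [hEq, hInterp θ]
      exact mul_le_mul_right (ENNReal.rpow_le_rpow (h2 ▸ h1) (by positivity)) _
    calc KfunE N0 N1 T f = Filter.liminf c l := hctend.liminf_eq.symm
      _ ≤ _ := Filter.liminf_le_liminf hcle
  · -- limsup part
    set u : ℝ → ℝ≥0∞ := fun θ =>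
      (ENNReal.ofReal θ * N1 f ^ p + ENNReal.ofReal (1-θ) * S ^ p) ^ (1/p) with hudef
    have hutend : Filter.Tendsto u l (nhds S) := by
      have t1 : Filter.Tendsto (fun θ : ℝ => ENNReal.ofReal θ * N1 f ^ p) l (nhds 0) := by
        have := ENNReal.Tendsto.mul_const (ENNReal.tendsto_ofReal hθ0)
          (b := N1 f ^ p) (Or.inr (ENNReal.rpow_ne_top_of_nonneg hp.le hf1))
        simpa using this
      have t2 : Filter.Tendsto (fun θ : ℝ => ENNReal.ofReal (1-θ) * S ^ p) l (nhds (S ^ p)) := by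
        have h12 : Filter.Tendsto (fun θ : ℝ => (1:ℝ) - θ) l (nhds 1) := by
          simpa using (tendsto_const_nhds (x := (1:ℝ)) (f := l)).sub hθ0
        have := ENNReal.Tendsto.mul_const (ENNReal.tendsto_ofReal h12)
          (b := S ^ p) (Or.inl (by simp))
        simpa using this
      have t3 : Filter.Tendsto
          (fun θ : ℝ => ENNReal.ofReal θ * N1 f ^ p + ENNReal.ofReal (1-θ) * S ^ p)
          l (nhds (S ^ p)) := by
        simpa using t1.add t2
      have t4 := (ENNReal.continuous_rpow_const (y := 1/p)).continuousAt.tendsto.comp t3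
      have hSp : (S ^ p) ^ (1/p) = S := by rw [one_div, ENNReal.rpow_rpow_inv hp.ne']
      rw [hSp] at t4
      rw [hudef]
      exact t4
    have hgle : ∀ᶠ θ : ℝ in l,
        ENNReal.ofReal ((θ * (1 - θ) * p) ^ (1 / p)) * interpNormE N0 N1 θ p f ≤ u θ := by
      filter_upwards [hl] with θ hθ
      have hθp : 0 < θ * p := mul_pos hθ.1 hp
      have hθ1p : 0 < (1-θ) * p := mul_pos (by linarith [hθ.2]) hp
      have hsplit : I θ = (∫⁻ t in Set.Ioc (0:ℝ) 1,
            ENNReal.ofReal (t ^ (-θ * p - 1)) * KfunE N0 N1 t f ^ p)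
          + ∫⁻ t in Set.Ioi (1:ℝ),
            ENNReal.ofReal (t ^ (-θ * p - 1)) * KfunE N0 N1 t f ^ p := by
        simp only [hIdef]
        rw [← Set.Ioc_union_Ioi_eq_Ioi (zero_le_one (α := ℝ)),
          MeasureTheory.lintegral_union measurableSet_Ioi Set.Ioc_disjoint_Ioi_same]
      have hhead : ∫⁻ t in Set.Ioc (0:ℝ) 1,
            ENNReal.ofReal (t ^ (-θ * p - 1)) * KfunE N0 N1 t f ^ p
          ≤ ENNReal.ofReal (1 / ((1-θ)*p)) * N1 f ^ p := by
        calc ∫⁻ t in Set.Ioc (0:ℝ) 1,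
              ENNReal.ofReal (t ^ (-θ * p - 1)) * KfunE N0 N1 t f ^ p
            ≤ ∫⁻ t in Set.Ioc (0:ℝ) 1,
              ENNReal.ofReal (t ^ ((1-θ) * p - 1)) * N1 f ^ p := by
              refine MeasureTheory.setLIntegral_mono' measurableSet_Ioc fun t ht => ?_
              have htt : (0:ℝ) < t := ht.1
              calc ENNReal.ofReal (t ^ (-θ * p - 1)) * KfunE N0 N1 t f ^ p
                  ≤ ENNReal.ofReal (t ^ (-θ * p - 1)) * (ENNReal.ofReal (t ^ p) * N1 f ^ p) := by
                    refine mul_le_mul_right ?_ _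
                    calc KfunE N0 N1 t f ^ p ≤ (ENNReal.ofReal t * N1 f) ^ p :=
                          ENNReal.rpow_le_rpow (hKle1 t) hp.le
                      _ = _ := by
                          rw [ENNReal.mul_rpow_of_nonneg _ _ hp.le,
                            ENNReal.ofReal_rpow_of_pos htt]
                _ = ENNReal.ofReal (t ^ ((1-θ) * p - 1)) * N1 f ^ p := by
                    rw [← mul_assoc, ← ENNReal.ofReal_mul (Real.rpow_nonneg htt.le _),
                      ← Real.rpow_add htt, show -θ * p - 1 + p = (1-θ) * p - 1 by ring]
          _ = ENNReal.ofReal (1 / ((1-θ)*p)) * N1 f ^ p := by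
              rw [MeasureTheory.lintegral_mul_const _ (hOM _),
                lint_head hθ1p one_pos, Real.one_rpow]
      have htail : ∫⁻ t in Set.Ioi (1:ℝ),
            ENNReal.ofReal (t ^ (-θ * p - 1)) * KfunE N0 N1 t f ^ p
          ≤ ENNReal.ofReal (1 / (θ*p)) * S ^ p := by
        calc ∫⁻ t in Set.Ioi (1:ℝ),
              ENNReal.ofReal (t ^ (-θ * p - 1)) * KfunE N0 N1 t f ^ p
            ≤ ∫⁻ t in Set.Ioi (1:ℝ), ENNReal.ofReal (t ^ (-θ * p - 1)) * S ^ p := by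
              refine MeasureTheory.setLIntegral_mono' measurableSet_Ioi fun t ht => ?_
              exact mul_le_mul_right
                (ENNReal.rpow_le_rpow (hKS t (lt_trans one_pos ht)) hp.le) _
          _ = ENNReal.ofReal (1 / (θ*p)) * S ^ p := by
              rw [MeasureTheory.lintegral_mul_const _ (hOM _),
                show -θ * p - 1 = (-(θ*p)) - 1 by ring, lint_tail (by linarith) one_pos,
                Real.one_rpow, neg_neg]
      have hIbound : ENNReal.ofReal (θ * (1-θ) * p) * I θ
          ≤ ENNReal.ofReal θ * N1 f ^ p + ENNReal.ofReal (1-θ) * S ^ p := by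
        calc ENNReal.ofReal (θ * (1-θ) * p) * I θ
            ≤ ENNReal.ofReal (θ * (1-θ) * p) *
              ((ENNReal.ofReal (1 / ((1-θ)*p)) * N1 f ^ p)
                + ENNReal.ofReal (1 / (θ*p)) * S ^ p) := by
              rw [hsplit]
              exact mul_le_mul_right (add_le_add hhead htail) _
          _ = ENNReal.ofReal θ * N1 f ^ p + ENNReal.ofReal (1-θ) * S ^ p := by
              have hA : 0 < θ * (1-θ) * p := mul_pos (mul_pos hθ.1 (by linarith [hθ.2])) hp
              rw [mul_add, ← mul_assoc, ← mul_assoc,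
                ← ENNReal.ofReal_mul hA.le, ← ENNReal.ofReal_mul hA.le,
                show θ * (1-θ) * p * (1 / ((1-θ)*p)) = θ from by have : (1:ℝ) - θ ≠ 0 := by linarith [hθ.2]
                                                                 field_simp,
                show θ * (1-θ) * p * (1 / (θ*p)) = 1-θ from by have := hθ.1.ne'; field_simp]
      have hgEq : ENNReal.ofReal ((θ * (1 - θ) * p) ^ (1 / p)) * interpNormE N0 N1 θ p f
          = (ENNReal.ofReal (θ * (1-θ) * p) * I θ) ^ (1/p) := by
        rw [hInterp θ, ENNReal.mul_rpow_of_nonneg _ _ (by positivity),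
          ENNReal.ofReal_rpow_of_pos (by nlinarith [hθ.1, hθ.2, hp])]
      rw [hgEq, hudef]
      exact ENNReal.rpow_le_rpow hIbound (by positivity)
    calc Filter.limsup (fun θ : ℝ =>
          ENNReal.ofReal ((θ * (1 - θ) * p) ^ (1 / p)) * interpNormE N0 N1 θ p f) l
        ≤ Filter.limsup u l := Filter.limsup_le_limsup hgle
      _ = S := hutend.limsup_eq

end Proof
end

section
/- Lower bound showing blow-up of Butzer seminorms in the counterexample: let p ∈ (1,∞), t ∈ (0,1), and suppose K : ℕ₀ → ℝ satisfies K(l) ≥ c · 2^{-lt}(1+l)^{1/p} for all l ∈ ℕ₀ with c > 0. Then for s ∈ (0,t), Σ_{l=0}^∞ 2^{l s p} K(l)^p ≥ c' (t-s)^{-2}, where c' > 0 depends only on p, t, c. Hence (t-s)^{1/p} (Σ_l 2^{lsp} K(l)^p)^{1/p} ≥ c'' (t-s)^{-1/p} → ∞ as s ↑ t. -/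
open scoped ENNReal

/-- Lower bound showing blow-up of Butzer seminorms in the counterexample: let `p ∈ (1,∞)`,
`t ∈ (0,1)`, `c > 0`. There are `c', c'' > 0` (depending only on `p, t, c`) such that for
every `K : ℕ → ℝ` with `K(l) ≥ c 2^{-lt}(1+l)^{1/p}` and every `s ∈ (0,t)`:
`Σ_l 2^{lsp} K(l)^p ≥ c' (t-s)^{-2}`, hence
`(t-s)^{1/p} (Σ_l 2^{lsp} K(l)^p)^{1/p} ≥ c'' (t-s)^{-1/p}`. -/
theorem stmt14 (p t c : ℝ) (hp : 1 < p) (ht : t ∈ Set.Ioo (0 : ℝ) 1) (hc : 0 < c) :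
    ∃ c' : ℝ, 0 < c' ∧ ∃ c'' : ℝ, 0 < c'' ∧
      ∀ K : ℕ → ℝ,
        (∀ l : ℕ, c * (2 : ℝ) ^ (-(l : ℝ) * t) * (1 + (l : ℝ)) ^ (1 / p) ≤ K l) →
        ∀ s ∈ Set.Ioo (0 : ℝ) t,
          ENNReal.ofReal (c' * (t - s) ^ (-2 : ℝ)) ≤
              (∑' l : ℕ, ENNReal.ofReal ((2 : ℝ) ^ ((l : ℝ) * s * p) * K l ^ p)) ∧
            ENNReal.ofReal (c'' * (t - s) ^ (-(1 / p))) ≤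
              ENNReal.ofReal ((t - s) ^ (1 / p)) *
                (∑' l : ℕ, ENNReal.ofReal ((2 : ℝ) ^ ((l : ℝ) * s * p) * K l ^ p)) ^ (1 / p) := by
  have hp0 : (0:ℝ) < p := lt_trans one_pos hp
  have hpne : p ≠ 0 := ne_of_gt hp0
  have hlog2 : (0:ℝ) < Real.log 2 := Real.log_pos (by norm_num)
  have hcp : (0:ℝ) < c ^ p := Real.rpow_pos_of_pos hc p
  set c' : ℝ := c ^ p / (p * Real.log 2) ^ 2 with hc'def
  have hc'pos : 0 < c' := by positivity
  refine ⟨c', hc'pos, c' ^ (1/p), Real.rpow_pos_of_pos hc'pos _, ?_⟩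
  intro K hK s hs
  obtain ⟨hs0, hst⟩ := hs
  have hts : (0:ℝ) < t - s := sub_pos.mpr hst
  set x : ℝ := (2:ℝ) ^ ((s - t) * p) with hxdef
  have hx0 : 0 < x := Real.rpow_pos_of_pos (by norm_num) _
  have hx1 : x < 1 := Real.rpow_lt_one_of_one_lt_of_neg (by norm_num)
    (mul_neg_of_neg_of_pos (sub_neg.mpr hst) hp0)
  have h1x : 0 < 1 - x := by linarith
  -- pointwise lower bound
  have hterm : ∀ l : ℕ, c ^ p * ((1 + (l:ℝ)) * x ^ l) ≤
      (2:ℝ) ^ ((l:ℝ) * s * p) * K l ^ p := by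
    intro l
    have hb : (0:ℝ) ≤ c * (2:ℝ) ^ (-(l:ℝ) * t) * (1 + (l:ℝ)) ^ (1/p) := by positivity
    have h1 : (c * (2:ℝ) ^ (-(l:ℝ) * t) * (1 + (l:ℝ)) ^ (1/p)) ^ p ≤ K l ^ p :=
      Real.rpow_le_rpow hb (hK l) hp0.le
    have h2 : (c * (2:ℝ) ^ (-(l:ℝ) * t) * (1 + (l:ℝ)) ^ (1/p)) ^ p
        = c ^ p * ((2:ℝ) ^ (-(l:ℝ) * t)) ^ p * (1 + (l:ℝ)) := by
      rw [Real.mul_rpow (by positivity) (by positivity),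
        Real.mul_rpow (by positivity) (by positivity),
        ← Real.rpow_mul (by positivity : (0:ℝ) ≤ 1 + (l:ℝ)), one_div_mul_cancel hpne,
        Real.rpow_one]
    have h3 : (2:ℝ) ^ ((l:ℝ) * s * p) * ((2:ℝ) ^ (-(l:ℝ) * t)) ^ p = x ^ l := by
      rw [← Real.rpow_natCast x l, hxdef,
        ← Real.rpow_mul (by norm_num : (0:ℝ) ≤ 2),
        ← Real.rpow_mul (by norm_num : (0:ℝ) ≤ 2),
        ← Real.rpow_add (by norm_num : (0:ℝ) < 2)]
      ring_nf
    calc c ^ p * ((1 + (l:ℝ)) * x ^ l)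
        = (2:ℝ) ^ ((l:ℝ) * s * p) * (c * (2:ℝ) ^ (-(l:ℝ) * t) * (1 + (l:ℝ)) ^ (1/p)) ^ p := by
          rw [h2, ← h3]; ring
      _ ≤ (2:ℝ) ^ ((l:ℝ) * s * p) * K l ^ p := by
          exact mul_le_mul_of_nonneg_left h1 (by positivity)
  -- summability and sum of the lower bound
  have hs1 : Summable (fun n : ℕ => x ^ n) := summable_geometric_of_lt_one hx0.le hx1
  have hnorm : ‖x‖ < 1 := by rwa [Real.norm_eq_abs, abs_of_pos hx0]
  have hs2 : Summable (fun n : ℕ => (n:ℝ) * x ^ n) := by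
    have := summable_pow_mul_geometric_of_norm_lt_one 1 hnorm
    simpa using this
  have hsg : Summable (fun n : ℕ => (1 + (n:ℝ)) * x ^ n) := by
    have := hs1.add hs2
    simpa [add_mul, one_mul] using this
  have hsumval : ∑' n : ℕ, (1 + (n:ℝ)) * x ^ n = ((1 - x) ^ 2)⁻¹ := by
    have h := Summable.tsum_add hs1 hs2
    have e1 : ∑' n : ℕ, x ^ n = (1 - x)⁻¹ := tsum_geometric_of_lt_one hx0.le hx1
    have e2 : ∑' n : ℕ, (n:ℝ) * x ^ n = x / (1 - x) ^ 2 :=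
      tsum_coe_mul_geometric_of_norm_lt_one hnorm
    have : ∑' n : ℕ, (1 + (n:ℝ)) * x ^ n = ∑' n : ℕ, (x ^ n + (n:ℝ) * x ^ n) := by
      congr 1; funext n; ring
    rw [this, h, e1, e2]
    field_simp
    ring
  have hsgc : Summable (fun n : ℕ => c ^ p * ((1 + (n:ℝ)) * x ^ n)) := hsg.mul_left _
  have hsumc : ∑' n : ℕ, c ^ p * ((1 + (n:ℝ)) * x ^ n) = c ^ p * ((1 - x) ^ 2)⁻¹ := by
    rw [tsum_mul_left, hsumval]
  -- 1 - x ≤ (t-s) * p * log 2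
  have h1xle : 1 - x ≤ (t - s) * (p * Real.log 2) := by
    have hexp := Real.add_one_le_exp (Real.log 2 * ((s - t) * p))
    have : x = Real.exp (Real.log 2 * ((s - t) * p)) :=
      Real.rpow_def_of_pos (by norm_num) _
    rw [this]
    nlinarith [hexp]
  -- real inequality for the first claim
  have hreal : c' * (t - s) ^ (-2 : ℝ) ≤ c ^ p * ((1 - x) ^ 2)⁻¹ := by
    have hpow : (t - s) ^ (-2 : ℝ) = ((t - s) ^ (2:ℕ))⁻¹ := by
      rw [← Real.rpow_natCast (t - s) 2, ← Real.rpow_neg hts.le]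
      norm_num
    rw [hpow, hc'def]
    have hsq : (1 - x) ^ 2 ≤ ((t - s) * (p * Real.log 2)) ^ 2 :=
      pow_le_pow_left₀ h1x.le h1xle 2
    have hd : c ^ p / ((t - s) * (p * Real.log 2)) ^ 2 ≤ c ^ p / (1 - x) ^ 2 :=
      div_le_div_of_nonneg_left hcp.le (by positivity) hsq
    calc c ^ p / (p * Real.log 2) ^ 2 * ((t - s) ^ (2:ℕ))⁻¹
        = c ^ p / ((t - s) * (p * Real.log 2)) ^ 2 := by
          have hne1 : (p * Real.log 2) ≠ 0 := by positivity
          have hne2 : t - s ≠ 0 := ne_of_gt hts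
          field_simp
      _ ≤ c ^ p / (1 - x) ^ 2 := hd
      _ = c ^ p * ((1 - x) ^ 2)⁻¹ := by rw [div_eq_mul_inv]
  -- first claim
  have key : ENNReal.ofReal (c' * (t - s) ^ (-2 : ℝ)) ≤
      ∑' l : ℕ, ENNReal.ofReal ((2:ℝ) ^ ((l:ℝ) * s * p) * K l ^ p) := by
    calc ENNReal.ofReal (c' * (t - s) ^ (-2 : ℝ))
        ≤ ENNReal.ofReal (∑' n : ℕ, c ^ p * ((1 + (n:ℝ)) * x ^ n)) := by
          rw [hsumc]; exact ENNReal.ofReal_le_ofReal hreal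
      _ = ∑' n : ℕ, ENNReal.ofReal (c ^ p * ((1 + (n:ℝ)) * x ^ n)) :=
          ENNReal.ofReal_tsum_of_nonneg (fun n => by positivity) hsgc
      _ ≤ ∑' l : ℕ, ENNReal.ofReal ((2:ℝ) ^ ((l:ℝ) * s * p) * K l ^ p) :=
          ENNReal.tsum_le_tsum (fun l => ENNReal.ofReal_le_ofReal (hterm l))
  refine ⟨key, ?_⟩
  -- second claim
  have h1p : (0:ℝ) ≤ 1/p := by positivity
  have step1 : ENNReal.ofReal ((c' * (t - s) ^ (-2 : ℝ)) ^ (1/p)) ≤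
      (∑' l : ℕ, ENNReal.ofReal ((2:ℝ) ^ ((l:ℝ) * s * p) * K l ^ p)) ^ (1/p) := by
    rw [← ENNReal.ofReal_rpow_of_nonneg (by positivity) h1p]
    exact ENNReal.rpow_le_rpow key h1p
  calc ENNReal.ofReal (c' ^ (1/p) * (t - s) ^ (-(1/p)))
      = ENNReal.ofReal ((t - s) ^ (1/p) * (c' * (t - s) ^ (-2 : ℝ)) ^ (1/p)) := by
        congr 1
        rw [Real.mul_rpow hc'pos.le (by positivity), ← Real.rpow_mul hts.le,
          mul_comm ((t-s) ^ (1/p)), mul_assoc, ← Real.rpow_add hts]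
        congr 1
        ring
    _ = ENNReal.ofReal ((t - s) ^ (1/p)) * ENNReal.ofReal ((c' * (t - s) ^ (-2 : ℝ)) ^ (1/p)) :=
        ENNReal.ofReal_mul (by positivity)
    _ ≤ ENNReal.ofReal ((t - s) ^ (1/p)) *
        (∑' l : ℕ, ENNReal.ofReal ((2:ℝ) ^ ((l:ℝ) * s * p) * K l ^ p)) ^ (1/p) :=
        mul_le_mul_right step1 _
end
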